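/- Let (X, G) be a minimal distal topological dynamical system with X compact metric. Then every quasi-factor Z of (X, G) (i.e. every minimal subsystem of the induced system on the hyperspace 2^X) is a factor of the dynamical system (E(X,G), G): there exists a continuous surjective G-equivariant map from E(X,G) onto Z. -/

import Mathlib

open TopologicalSpace Filter Set Metric

namespace QFProof

variable {G X : Type*} [Group G] [MetricSpace X] [CompactSpace X]
  [MulAction G X] [ContinuousConstSMul G X]

/-- The ambient compact right-topological semigroup. -/
abbrev P (X : Type*) [MetricSpace X] : Type _ :=
  (X → X) × (NonemptyCompacts X → NonemptyCompacts X)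

instance : Semigroup (P X) where
  mul v w := (v.1 ∘ w.1, v.2 ∘ w.2)
  mul_assoc _ _ _ := rfl

lemma mul_fst (v w : P X) : (v * w).1 = v.1 ∘ w.1 := rfl
lemma mul_snd (v w : P X) : (v * w).2 = v.2 ∘ w.2 := rfl

lemma contR (w : P X) : Continuous (· * w : P X → P X) := by
  have : (· * w : P X → P X) = fun v => ((fun x => v.1 (w.1 x), fun A => v.2 (w.2 A)) : P X) := rfl
  rw [this]
  exact Continuous.prodMk
    (continuous_pi fun x => (continuous_apply (w.1 x)).comp continuous_fst)
    (continuous_pi fun A => (continuous_apply (w.2 A)).comp continuous_snd)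

section Sigma

variable (σ : G → NonemptyCompacts X → NonemptyCompacts X)

/-- generators -/
def gen (g : G) : P X := (fun x => g • x, σ g)

/-- the enveloping semigroup object -/
def EE : Set (P X) := closure (Set.range (gen σ))

variable {σ}

lemma continuous_infDist_pair :
    Continuous fun q : X × NonemptyCompacts X => infDist q.1 (q.2 : Set X) := by
  rw [Metric.continuous_iff]
  rintro ⟨x, A⟩ ε hε
  refine ⟨ε / 2, by linarith, ?_⟩
  rintro ⟨y, B⟩ hq
  rw [Prod.dist_eq] at hq
  have h1 : dist y x < ε / 2 := lt_of_le_of_lt (le_max_left _ _) hq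
  have h2 : hausdorffDist (B : Set X) (A : Set X) < ε / 2 := by
    have := lt_of_le_of_lt (le_max_right (dist y x) (dist B A)) hq
    rwa [NonemptyCompacts.dist_eq] at this
  have fin1 : EMetric.hausdorffEdist (B : Set X) (A : Set X) ≠ ⊤ :=
    hausdorffEdist_ne_top_of_nonempty_of_bounded B.nonempty A.nonempty
      B.isCompact.isBounded A.isCompact.isBounded
  have fin2 : EMetric.hausdorffEdist (A : Set X) (B : Set X) ≠ ⊤ := by
    exact hausdorffEdist_ne_top_of_nonempty_of_bounded A.nonempty B.nonempty
      A.isCompact.isBounded B.isCompact.isBounded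
  have hcomm : hausdorffDist (A : Set X) (B : Set X) = hausdorffDist (B : Set X) (A : Set X) :=
    hausdorffDist_comm
  have e1 : infDist y (B : Set X) ≤ infDist x (A : Set X) + dist y x
      + hausdorffDist (A : Set X) (B : Set X) := by
    have i1 : infDist y (B : Set X) ≤ infDist y (A : Set X)
        + hausdorffDist (A : Set X) (B : Set X) := infDist_le_infDist_add_hausdorffDist fin2
    have i2 : infDist y (A : Set X) ≤ infDist x (A : Set X) + dist y x :=
      infDist_le_infDist_add_dist
    linarith
  have e2 : infDist x (A : Set X) ≤ infDist y (B : Set X) + dist y x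
      + hausdorffDist (A : Set X) (B : Set X) := by
    have i1 : infDist x (A : Set X) ≤ infDist x (B : Set X)
        + hausdorffDist (B : Set X) (A : Set X) := infDist_le_infDist_add_hausdorffDist fin1
    have i2 : infDist x (B : Set X) ≤ infDist y (B : Set X) + dist x y :=
      infDist_le_infDist_add_dist
    rw [dist_comm] at i2
    linarith [hcomm]
  rw [Real.dist_eq, abs_sub_lt_iff]
  constructor <;> linarith

lemma isClosed_memPair :
    IsClosed {q : X × NonemptyCompacts X | q.1 ∈ (q.2 : Set X)} := by
  have h : {q : X × NonemptyCompacts X | q.1 ∈ (q.2 : Set X)}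
      = (fun q : X × NonemptyCompacts X => infDist q.1 (q.2 : Set X)) ⁻¹' {0} := by
    ext q
    simp only [mem_setOf_eq, mem_preimage, mem_singleton_iff]
    exact q.2.isCompact.isClosed.mem_iff_infDist_zero q.2.nonempty
  rw [h]
  exact isClosed_singleton.preimage continuous_infDist_pair

lemma mem_of_mem_EE (hσ : ∀ (g : G) (A : NonemptyCompacts X),
      ((σ g A : Set X)) = (fun x : X => g • x) '' A)
    {v : P X} (hv : v ∈ EE σ) (A : NonemptyCompacts X) {x : X} (hx : x ∈ (A : Set X)) :
    v.1 x ∈ (v.2 A : Set X) := by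
  have hc : Continuous fun u : P X => ((u.1 x, u.2 A) : X × NonemptyCompacts X) :=
    ((continuous_apply x).comp continuous_fst).prodMk
      ((continuous_apply A).comp continuous_snd)
  have hmaps : MapsTo (fun u : P X => ((u.1 x, u.2 A) : X × NonemptyCompacts X))
      (Set.range (gen σ)) {q : X × NonemptyCompacts X | q.1 ∈ (q.2 : Set X)} := by
    rintro _ ⟨g, rfl⟩
    simp only [gen, mem_setOf_eq]
    rw [hσ]
    exact mem_image_of_mem _ hx
  have h := map_mem_closure hc hv hmaps
  rwa [isClosed_memPair.closure_eq] at h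

lemma continuous_sigma (hσ : ∀ (g : G) (A : NonemptyCompacts X),
      ((σ g A : Set X)) = (fun x : X => g • x) '' A) (g : G) :
    Continuous (σ g) := by
  rw [Metric.continuous_iff]
  intro A ε hε
  obtain ⟨δ, hδ, hd⟩ := Metric.uniformContinuous_iff.1
    (CompactSpace.uniformContinuous_of_continuous
      (continuous_const_smul g : Continuous fun x : X => g • x)) (ε / 2) (by linarith)
  refine ⟨δ, hδ, fun B hB => ?_⟩
  rw [NonemptyCompacts.dist_eq] at hB ⊢
  have fin : EMetric.hausdorffEdist (B : Set X) (A : Set X) ≠ ⊤ :=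
    hausdorffEdist_ne_top_of_nonempty_of_bounded B.nonempty A.nonempty
      B.isCompact.isBounded A.isCompact.isBounded
  have key : hausdorffDist ((σ g B : Set X)) ((σ g A : Set X)) ≤ ε / 2 := by
    rw [hσ, hσ]
    apply hausdorffDist_le_of_mem_dist (by linarith)
    · rintro _ ⟨b, hb, rfl⟩
      obtain ⟨a, ha, hab⟩ := exists_dist_lt_of_hausdorffDist_lt hb hB fin
      exact ⟨g • a, mem_image_of_mem _ ha, (hd hab).le⟩
    · rintro _ ⟨a, ha, rfl⟩
      obtain ⟨b, hb, hba⟩ := exists_dist_lt_of_hausdorffDist_lt' ha hB fin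
      exact ⟨g • b, mem_image_of_mem _ hb, (hd (by rwa [dist_comm] at hba)).le⟩
  linarith

lemma gen_mul (hσ : ∀ (g : G) (A : NonemptyCompacts X),
      ((σ g A : Set X)) = (fun x : X => g • x) '' A) (g h : G) :
    gen σ g * gen σ h = gen σ (g * h) := by
  refine Prod.ext ?_ ?_
  · funext x
    show g • (h • x) = (g * h) • x
    rw [mul_smul]
  · funext A
    apply NonemptyCompacts.ext
    show ((σ g (σ h A) : Set X)) = ((σ (g * h) A : Set X))
    rw [hσ, hσ, hσ, Set.image_image]
    exact image_congr fun x _ => (mul_smul g h x).symm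

lemma gen_mem_EE (g : G) : gen σ g ∈ EE σ := subset_closure ⟨g, rfl⟩

lemma isClosed_EE : IsClosed (EE σ) := isClosed_closure

lemma gen_mul_mem (hσ : ∀ (g : G) (A : NonemptyCompacts X),
      ((σ g A : Set X)) = (fun x : X => g • x) '' A)
    (g : G) {v : P X} (hv : v ∈ EE σ) : gen σ g * v ∈ EE σ := by
  have hc : Continuous fun u : P X => gen σ g * u := by
    have : (fun u : P X => gen σ g * u)
        = fun u => ((fun x => g • u.1 x, fun A => σ g (u.2 A)) : P X) := rfl
    rw [this]
    exact Continuous.prodMk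
      (continuous_pi fun x =>
        (continuous_const_smul g).comp ((continuous_apply x).comp continuous_fst))
      (continuous_pi fun A =>
        (continuous_sigma hσ g).comp ((continuous_apply A).comp continuous_snd))
  have hmaps : MapsTo (fun u : P X => gen σ g * u) (Set.range (gen σ)) (Set.range (gen σ)) := by
    rintro _ ⟨h, rfl⟩
    exact ⟨g * h, (gen_mul hσ g h).symm⟩
  exact map_mem_closure hc hv hmaps

lemma mul_mem_EE (hσ : ∀ (g : G) (A : NonemptyCompacts X),
      ((σ g A : Set X)) = (fun x : X => g • x) '' A)
    {v w : P X} (hv : v ∈ EE σ) (hw : w ∈ EE σ) : v * w ∈ EE σ := by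
  have hmaps : MapsTo (· * w) (Set.range (gen σ)) (EE σ) := by
    rintro _ ⟨g, rfl⟩
    exact gen_mul_mem hσ g hw
  have h := map_mem_closure (contR w) hv hmaps
  rwa [(isClosed_EE (σ := σ)).closure_eq] at h

lemma isCompact_EE : IsCompact (EE σ) := isClosed_closure.isCompact

lemma inj_fst (hdistal : ∀ x₁ x₂ : X,
      (∃ x : X, (x, x) ∈ closure (Set.range fun g : G => (g • x₁, g • x₂))) → x₁ = x₂)
    {v : P X} (hv : v ∈ EE σ) : Function.Injective v.1 := by
  intro x₁ x₂ h
  apply hdistal x₁ x₂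
  refine ⟨v.1 x₂, ?_⟩
  have hc : Continuous fun u : P X => ((u.1 x₁, u.1 x₂) : X × X) :=
    ((continuous_apply x₁).comp continuous_fst).prodMk
      ((continuous_apply x₂).comp continuous_fst)
  have hmaps : MapsTo (fun u : P X => ((u.1 x₁, u.1 x₂) : X × X))
      (Set.range (gen σ)) (Set.range fun g : G => ((g • x₁, g • x₂) : X × X)) := by
    rintro _ ⟨g, rfl⟩
    exact ⟨g, rfl⟩
  have hcl := map_mem_closure hc hv hmaps
  rwa [h] at hcl

lemma idem_fst (hdistal : ∀ x₁ x₂ : X,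
      (∃ x : X, (x, x) ∈ closure (Set.range fun g : G => (g • x₁, g • x₂))) → x₁ = x₂)
    {m : P X} (hm : m ∈ EE σ) (hid : m * m = m) : m.1 = id := by
  have h1 : m.1 ∘ m.1 = m.1 := congrArg Prod.fst hid
  funext x
  exact inj_fst hdistal hm (congrFun h1 x)

variable {Z : Set (NonemptyCompacts X)}

lemma ev_mem_Z (hZcl : IsClosed Z) (hZinv : ∀ (g : G), ∀ A ∈ Z, σ g A ∈ Z)
    {v : P X} (hv : v ∈ EE σ) {A : NonemptyCompacts X} (hA : A ∈ Z) : v.2 A ∈ Z := by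
  have hc : Continuous fun u : P X => u.2 A := (continuous_apply A).comp continuous_snd
  have hmaps : MapsTo (fun u : P X => u.2 A) (Set.range (gen σ)) Z := by
    rintro _ ⟨g, rfl⟩
    exact hZinv g A hA
  have h := map_mem_closure hc hv hmaps
  rwa [hZcl.closure_eq] at h

lemma exists_ev (hZmin : ∀ A ∈ Z, Z ⊆ closure (Set.range fun g : G => σ g A))
    {A B : NonemptyCompacts X} (hA : A ∈ Z) (hB : B ∈ Z) : ∃ v ∈ EE σ, v.2 A = B := by
  have hc : Continuous fun u : P X => u.2 A := (continuous_apply A).comp continuous_snd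
  have hcomp : IsCompact ((fun u : P X => u.2 A) '' EE σ) := isCompact_EE.image hc
  have hsub : (Set.range fun g : G => σ g A) ⊆ (fun u : P X => u.2 A) '' EE σ := by
    rintro _ ⟨g, rfl⟩
    exact ⟨gen σ g, gen_mem_EE g, rfl⟩
  have hmem : B ∈ (fun u : P X => u.2 A) '' EE σ :=
    closure_minimal hsub hcomp.isClosed (hZmin A hA hB)
  obtain ⟨v, hv, hvB⟩ := hmem
  exact ⟨v, hv, hvB⟩

/-- Key lemma: elements of `EE` whose first coordinate is the identity act trivially on `Z`. -/
lemma claimA (hσ : ∀ (g : G) (A : NonemptyCompacts X),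
      ((σ g A : Set X)) = (fun x : X => g • x) '' A)
    (hdistal : ∀ x₁ x₂ : X,
      (∃ x : X, (x, x) ∈ closure (Set.range fun g : G => (g • x₁, g • x₂))) → x₁ = x₂)
    (hZcl : IsClosed Z) (hZinv : ∀ (g : G), ∀ A ∈ Z, σ g A ∈ Z)
    (hZmin : ∀ A ∈ Z, Z ⊆ closure (Set.range fun g : G => σ g A))
    {u : P X} (hu : u ∈ EE σ) (hu1 : u.1 = id)
    {B : NonemptyCompacts X} (hB : B ∈ Z) : u.2 B = B := by
  have sub1 : (B : Set X) ⊆ (u.2 B : Set X) := by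
    intro x hx
    have h := mem_of_mem_EE hσ hu B hx
    rw [hu1] at h
    simpa using h
  have hUB : u.2 B ∈ Z := ev_mem_Z hZcl hZinv hu hB
  obtain ⟨s, hs, hsu⟩ := exists_ev hZmin hUB hB
  have htE : s * u ∈ EE σ := mul_mem_EE hσ hs hu
  have ht2 : (s * u).2 B = B := hsu
  set EB : Set (P X) := EE σ ∩ {v : P X | v.2 B = B} with hEBdef
  have hEBcomp : IsCompact EB :=
    isCompact_EE.inter_right (isClosed_singleton.preimage
      ((continuous_apply B).comp continuous_snd))
  have htEB : s * u ∈ EB := ⟨htE, ht2⟩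
  have hEBmul : ∀ a ∈ EB, ∀ b ∈ EB, a * b ∈ EB := by
    intro a ha b hb
    refine ⟨mul_mem_EE hσ ha.1 hb.1, ?_⟩
    show a.2 (b.2 B) = B
    rw [show b.2 B = B from hb.2]
    exact ha.2
  set S : Set (P X) := (· * (s * u)) '' EB with hSdef
  have hScomp : IsCompact S := hEBcomp.image (contR (s * u))
  have hSne : S.Nonempty := ⟨(s * u) * (s * u), (s * u), htEB, rfl⟩
  have hSsub : S ⊆ EB := by
    rintro _ ⟨a, ha, rfl⟩
    exact hEBmul a ha (s * u) htEB
  have hSmul : ∀ a ∈ S, ∀ b ∈ S, a * b ∈ S := by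
    rintro _ ⟨a, ha, rfl⟩ _ ⟨b, hb, rfl⟩
    refine ⟨a * (s * u) * b, hEBmul _ (hEBmul a ha (s * u) htEB) b hb, ?_⟩
    simp only [mul_assoc]
  obtain ⟨m, hmS, hmid⟩ := exists_idempotent_in_compact_subsemigroup contR S hSne hScomp hSmul
  obtain ⟨w', hw', hwt⟩ := hmS
  have hmEB : m ∈ EB := hSsub ⟨w', hw', hwt⟩
  have hm1 : m.1 = id := idem_fst hdistal hmEB.1 hmid
  have hrE : w' * s ∈ EE σ := mul_mem_EE hσ hw'.1 hs
  have hru : (w' * s) * u = m := by rw [mul_assoc]; exact hwt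
  have hm1r : m.1 = (w' * s).1 ∘ u.1 := by rw [← hru]; rfl
  have hr1 : (w' * s).1 = id := by
    rw [hu1, Function.comp_id] at hm1r
    exact hm1r.symm.trans hm1
  have hr2 : (w' * s).2 (u.2 B) = B := by
    have h1 : ((w' * s) * u).2 B = m.2 B := by rw [hru]
    have h2 : m.2 B = B := hmEB.2
    exact h1.trans h2
  apply NonemptyCompacts.ext
  refine Subset.antisymm ?_ sub1
  intro y hy
  have h := mem_of_mem_EE hσ hrE (u.2 B) hy
  rw [hr2, hr1] at h
  simpa using h

/-- Uniqueness: two elements of `EE` with the same first coordinate agree on points of `Z`. -/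
lemma uniq (hσ : ∀ (g : G) (A : NonemptyCompacts X),
      ((σ g A : Set X)) = (fun x : X => g • x) '' A)
    (hdistal : ∀ x₁ x₂ : X,
      (∃ x : X, (x, x) ∈ closure (Set.range fun g : G => (g • x₁, g • x₂))) → x₁ = x₂)
    (hZcl : IsClosed Z) (hZinv : ∀ (g : G), ∀ A ∈ Z, σ g A ∈ Z)
    (hZmin : ∀ A ∈ Z, Z ⊆ closure (Set.range fun g : G => σ g A))
    {A₀ : NonemptyCompacts X} (hA₀ : A₀ ∈ Z)
    {v₁ v₂ : P X} (h1 : v₁ ∈ EE σ) (h2 : v₂ ∈ EE σ) (h12 : v₁.1 = v₂.1) :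
    v₁.2 A₀ = v₂.2 A₀ := by
  set S : Set (P X) := (· * v₁) '' EE σ with hSdef
  have hScomp : IsCompact S := isCompact_EE.image (contR v₁)
  have hSne : S.Nonempty := ⟨v₁ * v₁, v₁, h1, rfl⟩
  have hSsub : S ⊆ EE σ := by
    rintro _ ⟨a, ha, rfl⟩
    exact mul_mem_EE hσ ha h1
  have hSmul : ∀ a ∈ S, ∀ b ∈ S, a * b ∈ S := by
    rintro _ ⟨a, ha, rfl⟩ _ ⟨b, hb, rfl⟩
    refine ⟨a * v₁ * b, mul_mem_EE hσ (mul_mem_EE hσ ha h1) hb, ?_⟩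
    simp only [mul_assoc]
  obtain ⟨m, hmS, hmid⟩ := exists_idempotent_in_compact_subsemigroup contR S hSne hScomp hSmul
  obtain ⟨w, hw, hwv⟩ := hmS
  have hwv' : w * v₁ = m := hwv
  have hm1 : m.1 = id := idem_fst hdistal (hSsub ⟨w, hw, hwv⟩) hmid
  have hwf : w.1 ∘ v₁.1 = id := by
    have h : (w * v₁).1 = id := by rw [hwv']; exact hm1
    exact h
  have hfw : v₁.1 ∘ w.1 = id := by
    funext x
    apply inj_fst hdistal hw
    show w.1 (v₁.1 (w.1 x)) = w.1 (id x)
    have h := congrFun hwf (w.1 x)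
    simpa using h
  have hk1E : v₁ * w ∈ EE σ := mul_mem_EE hσ h1 hw
  have hk2E : w * v₂ ∈ EE σ := mul_mem_EE hσ hw h2
  have hk1id : (v₁ * w).1 = id := hfw
  have hk2id : (w * v₂).1 = id := by
    show w.1 ∘ v₂.1 = id
    rw [← h12]
    exact hwf
  have hB' : v₂.2 A₀ ∈ Z := ev_mem_Z hZcl hZinv h2 hA₀
  have c2 : w.2 (v₂.2 A₀) = A₀ :=
    claimA hσ hdistal hZcl hZinv hZmin hk2E hk2id hA₀
  have c1 : v₁.2 (w.2 (v₂.2 A₀)) = v₂.2 A₀ :=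
    claimA hσ hdistal hZcl hZinv hZmin hk1E hk1id hB'
  calc v₁.2 A₀ = v₁.2 (w.2 (v₂.2 A₀)) := by rw [c2]
  _ = v₂.2 A₀ := c1

lemma fst_mem_E {v : P X} (hv : v ∈ EE σ) :
    v.1 ∈ closure (Set.range fun g : G => fun x : X => g • x) := by
  have hmaps : MapsTo (Prod.fst : P X → X → X) (Set.range (gen σ))
      (Set.range fun g : G => fun x : X => g • x) := by
    rintro _ ⟨g, rfl⟩
    exact ⟨g, rfl⟩
  exact map_mem_closure continuous_fst hv hmaps

lemma exists_lift {f : X → X}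
    (hf : f ∈ closure (Set.range fun g : G => fun x : X => g • x)) :
    ∃ v ∈ EE σ, v.1 = f := by
  have hcomp : IsCompact ((Prod.fst : P X → X → X) '' EE σ) :=
    isCompact_EE.image continuous_fst
  have hsub : (Set.range fun g : G => fun x : X => g • x)
      ⊆ (Prod.fst : P X → X → X) '' EE σ := by
    rintro _ ⟨g, rfl⟩
    exact ⟨gen σ g, gen_mem_EE g, rfl⟩
  obtain ⟨v, hv, hvf⟩ := closure_minimal hsub hcomp.isClosed hf
  exact ⟨v, hv, hvf⟩

end Sigma

end QFProof

open QFProof in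
theorem quasifactor_of_distal_is_factor_of_enveloping
    {G X : Type*} [Group G]
    [MetricSpace X] [CompactSpace X]
    [MulAction G X] [ContinuousConstSMul G X]
    (hmin : MulAction.IsMinimal G X)
    (hdistal : ∀ x₁ x₂ : X,
      (∃ x : X, (x, x) ∈ closure (Set.range fun g : G => (g • x₁, g • x₂))) → x₁ = x₂)
    (E : Set (X → X)) (hE : E = closure (Set.range fun g : G => fun x : X => g • x))
    (σ : G → NonemptyCompacts X → NonemptyCompacts X)
    (hσ : ∀ (g : G) (A : NonemptyCompacts X), ((σ g A : Set X)) = (fun x : X => g • x) '' A)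
    (Z : Set (NonemptyCompacts X)) (hZne : Z.Nonempty) (hZcl : IsClosed Z)
    (hZinv : ∀ (g : G), ∀ A ∈ Z, σ g A ∈ Z)
    (hZmin : ∀ A ∈ Z, Z ⊆ closure (Set.range fun g : G => σ g A)) :
    ∃ π : (X → X) → NonemptyCompacts X,
      ContinuousOn π E ∧ π '' E = Z ∧
      ∀ (g : G), ∀ f ∈ E, π (g • f) = σ g (π f) := by
  classical
  obtain ⟨A₀, hA₀⟩ := hZne
  -- choose lifts to the enveloping semigroup
  have hlift : ∀ f : X → X, ∃ v : P X, f ∈ E → (v ∈ EE σ ∧ v.1 = f) := by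
    intro f
    by_cases hf : f ∈ E
    · obtain ⟨v, hv, hvf⟩ := exists_lift (σ := σ) (hE ▸ hf)
      exact ⟨v, fun _ => ⟨hv, hvf⟩⟩
    · exact ⟨gen σ 1, fun h => absurd h hf⟩
  choose vlift hvlift using hlift
  have huniq : ∀ v ∈ EE σ, ∀ v' ∈ EE σ, v.1 = v'.1 → v.2 A₀ = v'.2 A₀ :=
    fun v hv v' hv' h => uniq hσ hdistal hZcl hZinv hZmin hA₀ hv hv' h
  refine ⟨fun f => (vlift f).2 A₀, ?_, ?_, ?_⟩
  · -- continuity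
    intro f₀ hf₀
    rw [ContinuousWithinAt, tendsto_iff_ultrafilter]
    intro 𝒢 h𝒢
    have hE𝒢 : E ∈ 𝒢 := h𝒢 self_mem_nhdsWithin
    obtain ⟨w, -, hw⟩ := isCompact_univ.ultrafilter_le_nhds (𝒢.map vlift)
      (by rw [le_principal_iff]; exact univ_mem)
    have hwT : Tendsto vlift (𝒢 : Filter (X → X)) (nhds w) := hw
    have hwEE : w ∈ EE σ := by
      have hmem : EE σ ∈ 𝒢.map vlift :=
        Filter.mem_map.2 (Filter.mem_of_superset hE𝒢 fun f hf => (hvlift f hf).1)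
      have h := mem_closure_iff_ultrafilter.2 ⟨𝒢.map vlift, hmem, hw⟩
      rwa [(isClosed_EE (σ := σ)).closure_eq] at h
    have hwfst : w.1 = f₀ := by
      have h1 : Tendsto (fun f => (vlift f).1) (𝒢 : Filter (X → X)) (nhds w.1) :=
        (continuous_fst.tendsto w).comp hwT
      have h2 : (fun f => (vlift f).1) =ᶠ[(𝒢 : Filter (X → X))] id :=
        eventually_of_mem hE𝒢 fun f hf => (hvlift f hf).2
      have h3 : Tendsto id (𝒢 : Filter (X → X)) (nhds w.1) := h1.congr' h2
      have h4 : Tendsto id (𝒢 : Filter (X → X)) (nhds f₀) :=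
        le_trans h𝒢 nhdsWithin_le_nhds
      exact tendsto_nhds_unique h3 h4
    have hπw : Tendsto (fun f => (vlift f).2 A₀) (𝒢 : Filter (X → X)) (nhds (w.2 A₀)) :=
      (((continuous_apply A₀).comp continuous_snd).tendsto w).comp hwT
    have hval : w.2 A₀ = (vlift f₀).2 A₀ :=
      huniq w hwEE (vlift f₀) (hvlift f₀ hf₀).1 (by rw [hwfst, (hvlift f₀ hf₀).2])
    rwa [hval] at hπw
  · -- image
    apply Subset.antisymm
    · rintro _ ⟨f, hf, rfl⟩
      exact ev_mem_Z hZcl hZinv (hvlift f hf).1 hA₀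
    · intro B hB
      obtain ⟨v, hv, hvB⟩ := exists_ev (σ := σ) hZmin hA₀ hB
      have hfE : v.1 ∈ E := by rw [hE]; exact fst_mem_E hv
      refine ⟨v.1, hfE, ?_⟩
      have h := huniq (vlift v.1) (hvlift _ hfE).1 v hv ((hvlift _ hfE).2)
      show (vlift v.1).2 A₀ = B
      rw [h, hvB]
  · -- equivariance
    intro g f hf
    obtain ⟨hvE, hv1⟩ := hvlift f hf
    have hu : gen σ g * vlift f ∈ EE σ := gen_mul_mem hσ g hvE
    have hu1 : (gen σ g * vlift f).1 = g • f := by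
      funext x
      show g • (vlift f).1 x = (g • f) x
      rw [hv1]
      rfl
    have hgfE : g • f ∈ E := by
      have h := fst_mem_E hu
      rw [hu1] at h
      rwa [hE]
    have h := huniq (vlift (g • f)) (hvlift _ hgfE).1 (gen σ g * vlift f) hu
      (by rw [(hvlift _ hgfE).2, hu1])
    show (vlift (g • f)).2 A₀ = σ g ((vlift f).2 A₀)
    rw [h]
    rfl
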